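/- In a strictly quasi-submodular symmetric aggregative game, an aggregate-taking strategy s* yields a strictly higher payoff than any other strategy s' in any mixed monomorphic-deviation profile: for all s' ≠ s* and 1 ≤ m < n, π̃(s*, g(s',...,s' (m times), s*,...,s* (n-m times))) > π̃(s', g(s',...,s', s*,...,s*)). -/
import Mathlib

/-- In a strictly quasi-submodular symmetric aggregative game, an aggregate-taking
strategy `s*` earns strictly more than any other strategy `s'` in any profile where
`m` agents play `s'` and `n - m` agents play `s*` (with `1 ≤ m < n`). -/
theorem ats_relative_advantage
    (n : ℕ) (hn : 2 ≤ n) (S : Finset ℝ)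
    (g : (Fin n → ℝ) → ℝ) (pay : ℝ → ℝ → ℝ)
    (hgsym : ∀ (σ : Equiv.Perm (Fin n)) (s : Fin n → ℝ), g (s ∘ σ) = g s)
    (hgmono : Monotone g)
    (hqsm1 : ∀ s1 s2 t1 t2 : ℝ, s1 < s2 → t1 < t2 →
      pay s2 t1 ≤ pay s1 t1 → pay s2 t2 < pay s1 t2)
    (hqsm2 : ∀ s1 s2 t1 t2 : ℝ, s1 < s2 → t1 < t2 →
      pay s1 t2 ≤ pay s2 t2 → pay s1 t1 < pay s2 t1)
    (sstar : ℝ) (hsS : sstar ∈ S)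
    (hATS : ∀ s ∈ S, s ≠ sstar →
      pay s (g fun _ => sstar) < pay sstar (g fun _ => sstar))
    (s' : ℝ) (hs'S : s' ∈ S) (hne : s' ≠ sstar)
    (m : ℕ) (hm1 : 1 ≤ m) (hmn : m < n) :
    pay s' (g fun i => if (i : ℕ) < m then s' else sstar) <
      pay sstar (g fun i => if (i : ℕ) < m then s' else sstar) := by
  have hATS' := hATS s' hs'S hne
  rcases lt_or_gt_of_ne hne with h | h
  · have hle : g (fun i => if (i : ℕ) < m then s' else sstar) ≤ g (fun _ => sstar) := by
      apply hgmono; intro i; dsimp only; split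
      · exact le_of_lt h
      · exact le_rfl
    rcases hle.lt_or_eq with hlt | heq
    · exact hqsm2 s' sstar _ _ h hlt hATS'.le
    · rw [heq]; exact hATS'
  · have hle : g (fun _ => sstar) ≤ g (fun i => if (i : ℕ) < m then s' else sstar) := by
      apply hgmono; intro i; dsimp only; split
      · exact le_of_lt h
      · exact le_rfl
    rcases hle.lt_or_eq with hlt | heq
    · exact hqsm1 sstar s' _ _ h hlt hATS'.le
    · rw [← heq]; exact hATS'
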